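/- Let A,B > 0 and a,b,c,d ∈ ℝ with a > 0, b > 0, c < 0, and d < 0. If f(t) := 1 − A t^a(1−t)^b − B t^c(1−t)^d has no degenerate roots in (0,1), then f has fewer than 6 roots in the open interval (0,1). -/

import Mathlib

open Real Set

/-! Auxiliary definitions -/

/-- The quadratic `R`. -/
def RC (a b c d t : ℝ) : ℝ :=
  ((a-c)*(1-t) - (b-d)*t) * (a-(a+b)*t) - (a+b)*t*(1-t)

/-- The derivative of `R`. -/
def RdC (a b c d t : ℝ) : ℝ :=
  -((a-c)+(b-d))*(a-(a+b)*t) - (a+b)*((a-c)*(1-t)-(b-d)*t) - (a+b)*(1-2*t)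

/-- The cubic `S`. -/
def SC (a b c d t : ℝ) : ℝ :=
  ((a-c-1)*(1-t) - (b-d-1)*t) * RC a b c d t + t*(1-t)*RdC a b c d t

/-- `h(t)` with `f'(t) = -t^(c-1)(1-t)^(d-1) h(t)`. -/
noncomputable def hC (a b c d A B t : ℝ) : ℝ :=
  A * (t^(a-c) * (1-t)^(b-d) * (a-(a+b)*t)) + B*(c-(c+d)*t)

/-- `h'(t)`. -/
noncomputable def h1C (a b c d A B t : ℝ) : ℝ :=
  A * (t^(a-c-1) * (1-t)^(b-d-1) * RC a b c d t) - B*(c+d)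

/-- `h''(t)`. -/
noncomputable def h2C (a b c d A B t : ℝ) : ℝ :=
  A * (t^(a-c-2) * (1-t)^(b-d-2) * SC a b c d t)

theorem HasDerivAt.congr_d {f : ℝ → ℝ} {x e1 e2 : ℝ} (h : HasDerivAt f e1 x)
    (he : e1 = e2) : HasDerivAt f e2 x := he ▸ h

section rpowFacts

variable {t : ℝ}

theorem rpow_shift1 (ht : t ≠ 0) (p : ℝ) : t ^ p = t ^ (p-1) * t := by
  have h := Real.rpow_add_one ht (p-1)
  rw [show p - 1 + 1 = p from by ring] at h
  exact h

theorem rpow_split (ht : 0 < t) (p q : ℝ) : t ^ p = t ^ q * t ^ (p - q) := by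
  have h := Real.rpow_add ht q (p - q)
  rw [show q + (p - q) = p from by ring] at h
  exact h

end rpowFacts

theorem hasDerivAt_RC (a b c d t : ℝ) :
    HasDerivAt (fun s => RC a b c d s) (RdC a b c d t) t := by
  have hlin : HasDerivAt (fun s : ℝ => 1 - s) (-1) t := (hasDerivAt_id t).const_sub 1
  have F1 : HasDerivAt (fun s : ℝ => (a-c)*(1-s) - (b-d)*s)
      ((a-c)*(-1) - (b-d)*1) t :=
    (hlin.const_mul (a-c)).sub ((hasDerivAt_id t).const_mul (b-d))
  have F2 : HasDerivAt (fun s : ℝ => a-(a+b)*s) (-((a+b)*1)) t :=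
    ((hasDerivAt_id t).const_mul (a+b)).const_sub a
  have F3 : HasDerivAt (fun s : ℝ => (a+b)*s*(1-s))
      ((a+b)*1*(1-t) + (a+b)*t*(-1)) t :=
    ((hasDerivAt_id t).const_mul (a+b)).mul hlin
  exact ((F1.mul F2).sub F3).congr_d (by simp only [RdC]; ring)

theorem hasDerivAt_hC (a b c d A B : ℝ) {t : ℝ} (ht0 : 0 < t) (ht1 : t < 1) :
    HasDerivAt (fun t => hC a b c d A B t) (h1C a b c d A B t) t := by
  have h1t : (0:ℝ) < 1 - t := by linarith
  have hlin : HasDerivAt (fun s : ℝ => 1 - s) (-1) t := (hasDerivAt_id t).const_sub 1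
  have hp : HasDerivAt (fun s : ℝ => s ^ (a-c)) ((a-c) * t^(a-c-1)) t :=
    Real.hasDerivAt_rpow_const (Or.inl ht0.ne')
  have hq : HasDerivAt (fun s : ℝ => (1-s) ^ (b-d)) (-1 * (b-d) * (1-t)^(b-d-1)) t :=
    hlin.rpow_const (Or.inl h1t.ne')
  have hP : HasDerivAt (fun s : ℝ => a-(a+b)*s) (-((a+b)*1)) t :=
    ((hasDerivAt_id t).const_mul (a+b)).const_sub a
  have hQ : HasDerivAt (fun s : ℝ => B*(c-(c+d)*s)) (B * -((c+d)*1)) t :=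
    (((hasDerivAt_id t).const_mul (c+d)).const_sub c).const_mul B
  have comb := ((((hp.mul hq).mul hP)).const_mul A).add hQ
  refine comb.congr_d ?_
  simp only [Pi.mul_apply]
  rw [rpow_shift1 ht0.ne' (a-c), rpow_shift1 h1t.ne' (b-d)]
  simp only [h1C, RC]
  ring

theorem hasDerivAt_h1C (a b c d A B : ℝ) {t : ℝ} (ht0 : 0 < t) (ht1 : t < 1) :
    HasDerivAt (fun t => h1C a b c d A B t) (h2C a b c d A B t) t := by
  have h1t : (0:ℝ) < 1 - t := by linarith
  have hlin : HasDerivAt (fun s : ℝ => 1 - s) (-1) t := (hasDerivAt_id t).const_sub 1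
  have hp : HasDerivAt (fun s : ℝ => s ^ (a-c-1)) ((a-c-1) * t^(a-c-1-1)) t :=
    Real.hasDerivAt_rpow_const (Or.inl ht0.ne')
  have hq : HasDerivAt (fun s : ℝ => (1-s) ^ (b-d-1)) (-1 * (b-d-1) * (1-t)^(b-d-1-1)) t :=
    hlin.rpow_const (Or.inl h1t.ne')
  have hR := hasDerivAt_RC a b c d t
  have comb := ((((hp.mul hq).mul hR)).const_mul A).sub_const (B*(c+d))
  refine comb.congr_d ?_
  simp only [Pi.mul_apply]
  rw [show a-c-1-1 = a-c-2 from by ring, show b-d-1-1 = b-d-2 from by ring,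
    rpow_shift1 ht0.ne' (a-c-1), rpow_shift1 h1t.ne' (b-d-1),
    show a-c-1-1 = a-c-2 from by ring, show b-d-1-1 = b-d-2 from by ring]
  simp only [h1C, h2C, SC]
  ring

theorem hasDerivAt_f (a b c d A B : ℝ) {t : ℝ} (ht0 : 0 < t) (ht1 : t < 1) :
    HasDerivAt (fun t : ℝ => 1 - A * t ^ a * (1 - t) ^ b - B * t ^ c * (1 - t) ^ d)
      (-(t^(c-1) * (1-t)^(d-1)) * hC a b c d A B t) t := by
  have h1t : (0:ℝ) < 1 - t := by linarith
  have hlin : HasDerivAt (fun s : ℝ => 1 - s) (-1) t := (hasDerivAt_id t).const_sub 1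
  have hpa : HasDerivAt (fun s : ℝ => s ^ a) (a * t^(a-1)) t :=
    Real.hasDerivAt_rpow_const (Or.inl ht0.ne')
  have hqb : HasDerivAt (fun s : ℝ => (1-s) ^ b) (-1 * b * (1-t)^(b-1)) t :=
    hlin.rpow_const (Or.inl h1t.ne')
  have hpc : HasDerivAt (fun s : ℝ => s ^ c) (c * t^(c-1)) t :=
    Real.hasDerivAt_rpow_const (Or.inl ht0.ne')
  have hqd : HasDerivAt (fun s : ℝ => (1-s) ^ d) (-1 * d * (1-t)^(d-1)) t :=
    hlin.rpow_const (Or.inl h1t.ne')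
  have T1 := (hpa.const_mul A).mul hqb
  have T2 := (hpc.const_mul B).mul hqd
  have comb := (T1.const_sub 1).sub T2
  refine comb.congr_d ?_
  rw [rpow_shift1 ht0.ne' a, rpow_shift1 h1t.ne' b, rpow_shift1 ht0.ne' c,
    rpow_shift1 h1t.ne' d,
    rpow_split ht0 (a-1) (c-1), rpow_split h1t (b-1) (d-1),
    show a - 1 - (c-1) = a - c from by ring, show b - 1 - (d-1) = b - d from by ring]
  simp only [hC]
  ring

/-- Rolle step inside `(0,1)`. -/
theorem rolle_step {φ ψ : ℝ → ℝ}
    (hD : ∀ x ∈ Ioo (0:ℝ) 1, HasDerivAt φ (ψ x) x)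
    {x y : ℝ} (hx : x ∈ Ioo (0:ℝ) 1) (hy : y ∈ Ioo (0:ℝ) 1) (hxy : x < y)
    (h0x : φ x = 0) (h0y : φ y = 0) :
    ∃ z, z ∈ Ioo x y ∧ ψ z = 0 := by
  have hsub : Icc x y ⊆ Ioo (0:ℝ) 1 := fun z hz =>
    ⟨lt_of_lt_of_le hx.1 hz.1, lt_of_le_of_lt hz.2 hy.2⟩
  have hcont : ContinuousOn φ (Icc x y) := fun z hz =>
    ((hD z (hsub hz)).continuousAt).continuousWithinAt
  obtain ⟨z, hz, hz0⟩ := exists_hasDerivAt_eq_zero hxy hcont (h0x.trans h0y.symm)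
    (fun z hz => hD z (hsub ⟨le_of_lt hz.1, le_of_lt hz.2⟩))
  exact ⟨z, hz, hz0⟩

theorem six_points {Z : Set ℝ} (h : 6 ≤ Z.encard) :
    ∃ T : Fin 6 → ℝ, StrictMono T ∧ ∀ i, T i ∈ Z := by
  obtain ⟨F, hFZ, hFcard⟩ := Set.exists_subset_encard_eq h
  have hfin : F.Finite := Set.finite_of_encard_eq_coe (show F.encard = ((6:ℕ):ℕ∞) by exact_mod_cast hFcard)
  have hcard : hfin.toFinset.card = 6 := by
    have h2 := hfin.encard_eq_coe_toFinset_card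
    rw [hFcard] at h2
    exact_mod_cast h2.symm
  let m := hfin.toFinset.orderIsoOfFin hcard
  refine ⟨fun i => (m i : ℝ), ?_, ?_⟩
  · intro i j hij
    exact_mod_cast m.strictMono hij
  · intro i
    exact hFZ (hfin.mem_toFinset.mp (m i).2)

theorem cubic_factor (lam p2 p1 p0 s1 s2 s3 x : ℝ) (h12 : s1 < s2) (h23 : s2 < s3)
    (e1 : -lam*s1^3 + p2*s1^2 + p1*s1 + p0 = 0)
    (e2 : -lam*s2^3 + p2*s2^2 + p1*s2 + p0 = 0)
    (e3 : -lam*s3^3 + p2*s3^2 + p1*s3 + p0 = 0) :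
    -lam*x^3 + p2*x^2 + p1*x + p0 = -lam*(x-s1)*(x-s2)*(x-s3) := by
  have d12 : s1 - s2 ≠ 0 := by intro h; nlinarith
  have d23 : s2 - s3 ≠ 0 := by intro h; nlinarith
  have d13 : s1 - s3 ≠ 0 := by intro h; nlinarith
  have E12 : -lam*(s1^2+s1*s2+s2^2) + p2*(s1+s2) + p1 = 0 := by
    have h : (s1-s2) * (-lam*(s1^2+s1*s2+s2^2) + p2*(s1+s2) + p1) = 0 := by
      linear_combination e1 - e2
    rcases mul_eq_zero.mp h with h'|h'
    · exact absurd h' d12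
    · exact h'
  have E23 : -lam*(s2^2+s2*s3+s3^2) + p2*(s2+s3) + p1 = 0 := by
    have h : (s2-s3) * (-lam*(s2^2+s2*s3+s3^2) + p2*(s2+s3) + p1) = 0 := by
      linear_combination e2 - e3
    rcases mul_eq_zero.mp h with h'|h'
    · exact absurd h' d23
    · exact h'
  have hp2 : p2 = lam*(s1+s2+s3) := by
    have h : (s1-s3) * (p2 - lam*(s1+s2+s3)) = 0 := by
      linear_combination E12 - E23
    rcases mul_eq_zero.mp h with h'|h'
    · exact absurd h' d13
    · linarith [sub_eq_zero.mp h']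
  have hp1 : p1 = -lam*(s1*s2+s1*s3+s2*s3) := by
    linear_combination E12 - (s1+s2)*hp2
  have hp0 : p0 = lam*(s1*s2*s3) := by
    linear_combination e1 - s1^2*hp2 - s1*hp1
  linear_combination x^2*hp2 + x*hp1 + hp0

theorem RC_between (a b c d : ℝ) (ha : 0 < a) (hb : 0 < b) (hc : c < 0) (hd : d < 0)
    {u v s : ℝ} (hus : u < s) (hsv : s < v)
    (hu : RC a b c d u < 0) (hv : RC a b c d v < 0) : RC a b c d s < 0 := by
  have hr2 : 0 < (a+b)*((a-c)+(b-d)+1) := by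
    apply mul_pos <;> linarith
  have key : (v-u) * RC a b c d s
      = (v-s)*RC a b c d u + (s-u)*RC a b c d v
        - ((a+b)*((a-c)+(b-d)+1))*(s-u)*(v-s)*(v-u) := by
    simp only [RC]; ring
  nlinarith [mul_neg_of_pos_of_neg (show (0:ℝ) < v - s by linarith) hu,
    mul_neg_of_pos_of_neg (show (0:ℝ) < s - u by linarith) hv,
    mul_pos (mul_pos (mul_pos hr2 (show (0:ℝ) < s - u by linarith))
      (show (0:ℝ) < v - s by linarith)) (show (0:ℝ) < v - u by linarith),
    mul_pos (show (0:ℝ) < v - u by linarith) (show (0:ℝ) < v - u by linarith)]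

set_option maxHeartbeats 1600000 in
theorem keyC (a b c d : ℝ) (ha : 0 < a) (hb : 0 < b) (hc : c < 0) (hd : d < 0)
    {s1 s2 s3 : ℝ} (h0 : 0 < s1) (h12 : s1 < s2) (h23 : s2 < s3) (h31 : s3 < 1)
    (hR1 : RC a b c d s1 < 0)
    (hS1 : SC a b c d s1 = 0) (hS2 : SC a b c d s2 = 0) (hS3 : SC a b c d s3 = 0) :
    False := by
  have hlam : 0 < ((a-c)+(b-d))*(a+b)*((a-c)+(b-d)+1) := by
    apply mul_pos (mul_pos (by linarith) (by linarith)); linarith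
  have hform : ∀ t : ℝ, SC a b c d t =
      -(((a-c)+(b-d))*(a+b)*((a-c)+(b-d)+1))*t^3
      + (-2*b*d - 2*b*c + 2*b*c*d + 2*b*c^2 + 2*b^2 - 2*b^2*c - a*d + a*d^2 - a*c
          + 4*a*c*d + 3*a*c^2 + 3*a*b - 4*a*b*d - 8*a*b*c + 3*a*b^2 + a^2 - 4*a^2*d
          - 6*a^2*c + 6*a^2*b + 3*a^3)*t^2
      + (b*c - b*c^2 - a*c - 2*a*c*d - 3*a*c^2 - a*b + 4*a*b*c + a^2 + 2*a^2*d
          + 6*a^2*c - 3*a^2*b - 3*a^3)*t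
      + (a*c + a*c^2 - a^2 - 2*a^2*c + a^3) := by
    intro t; simp only [SC, RC, RdC]; ring
  -- a root of R to the left of s1
  have hcont : ContinuousOn (fun t => RC a b c d t) (Icc 0 s1) := by
    apply Continuous.continuousOn
    simp only [RC]
    fun_prop
  have hR0pos : 0 < RC a b c d 0 := by
    rw [show RC a b c d 0 = (a-c)*a from by simp only [RC]; ring]
    exact mul_pos (by linarith) ha
  have himg := intermediate_value_Ioo' h0.le hcont (a := (0:ℝ)) (b := s1)
  obtain ⟨x, hxmem, hRx⟩ := himg ⟨hR1, hR0pos⟩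
  simp only at hRx
  have hx0 : 0 < x := hxmem.1
  have hxs1 : x < s1 := hxmem.2
  have hx1 : x < 1 := by linarith
  have hr2 : 0 < (a+b)*((a-c)+(b-d)+1) := by apply mul_pos <;> linarith
  have hRdx : RdC a b c d x < 0 := by
    have key : RC a b c d s1 = RC a b c d x + RdC a b c d x * (s1 - x)
        + ((a+b)*((a-c)+(b-d)+1))*(s1-x)^2 := by
      simp only [RC, RdC]; ring
    by_contra hge
    push_neg at hge
    nlinarith [mul_pos hr2 (pow_pos (show (0:ℝ) < s1 - x by linarith) 2),
      mul_nonneg hge (show (0:ℝ) ≤ s1 - x by linarith)]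
  have hSx_neg : SC a b c d x < 0 := by
    have hSx : SC a b c d x
        = ((a-c-1)*(1-x) - (b-d-1)*x) * RC a b c d x + x*(1-x)*RdC a b c d x := rfl
    rw [hSx, hRx]
    have h1 : x*(1-x)*RdC a b c d x < 0 :=
      mul_neg_of_pos_of_neg (mul_pos hx0 (by linarith)) hRdx
    linarith [h1]
  -- factor the cubic
  have e1 := hS1; rw [hform s1] at e1
  have e2 := hS2; rw [hform s2] at e2
  have e3 := hS3; rw [hform s3] at e3
  have hfac := cubic_factor _ _ _ _ s1 s2 s3 x h12 h23 e1 e2 e3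
  clear e1 e2 e3 hS1 hS2 hS3
  have hSx_pos : 0 < SC a b c d x := by
    rw [hform x, hfac]
    clear hfac hform hcont himg hRx hSx_neg hRdx hR1 hR0pos
    nlinarith [mul_pos (mul_pos (mul_pos hlam (show (0:ℝ) < s1 - x by linarith))
      (show (0:ℝ) < s2 - x by linarith)) (show (0:ℝ) < s3 - x by linarith)]
  linarith

theorem h1C_zero_RC_neg (a b c d A B : ℝ) (hA : 0 < A) (hB : 0 < B)
    (hc : c < 0) (hd : d < 0) {w : ℝ} (hw : w ∈ Ioo (0:ℝ) 1)
    (h0 : h1C a b c d A B w = 0) : RC a b c d w < 0 := by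
  have p1 : 0 < w ^ (a-c-1) := rpow_pos_of_pos hw.1 _
  have p2 : 0 < (1-w) ^ (b-d-1) := rpow_pos_of_pos (by linarith [hw.2] : (0:ℝ) < 1 - w) _
  simp only [h1C] at h0
  by_contra hge
  push_neg at hge
  nlinarith [mul_pos hB (show (0:ℝ) < -(c+d) by linarith),
    mul_nonneg (mul_nonneg (mul_nonneg hA.le p1.le) p2.le) hge]

theorem h2C_zero_SC_zero (a b c d A B : ℝ) (hA : 0 < A) {s : ℝ} (hs : s ∈ Ioo (0:ℝ) 1)
    (h0 : h2C a b c d A B s = 0) : SC a b c d s = 0 := by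
  have p1 : 0 < s ^ (a-c-2) := rpow_pos_of_pos hs.1 _
  have p2 : 0 < (1-s) ^ (b-d-2) := rpow_pos_of_pos (by linarith [hs.2] : (0:ℝ) < 1 - s) _
  simp only [h2C] at h0
  by_contra hne
  exact (mul_ne_zero hA.ne' (mul_ne_zero (mul_ne_zero p1.ne' p2.ne') hne)) h0

/-- Case C: `a, b > 0` and `c, d < 0`.
If `f(t) = 1 − A t^a (1−t)^b − B t^c (1−t)^d` has no degenerate roots in `(0,1)`
(a root `ζ` is degenerate if `f ζ = 0` and `f' ζ = 0`), then `f` has fewer than 6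
roots in `(0,1)`.  (`^` is `Real.rpow`.) -/
theorem fewer_than_six_roots_case_C
    (a b c d A B : ℝ) (hA : 0 < A) (hB : 0 < B)
    (ha : 0 < a) (hb : 0 < b) (hc : c < 0) (hd : d < 0)
    (f : ℝ → ℝ)
    (hf : f = fun t : ℝ => 1 - A * t ^ a * (1 - t) ^ b - B * t ^ c * (1 - t) ^ d)
    (hnd : ∀ t ∈ Set.Ioo (0 : ℝ) 1, f t = 0 → deriv f t ≠ 0) :
    {t ∈ Set.Ioo (0 : ℝ) 1 | f t = 0}.encard < 6 := by
  by_contra hcon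
  push_neg at hcon
  obtain ⟨T, hmono, hmem⟩ := six_points hcon
  have hio : ∀ i, T i ∈ Ioo (0:ℝ) 1 := fun i => (hmem i).1
  have hz : ∀ i, f (T i) = 0 := fun i => (hmem i).2
  subst hf
  -- derivative data
  have DF : ∀ x ∈ Ioo (0:ℝ) 1,
      HasDerivAt (fun t : ℝ => 1 - A * t ^ a * (1 - t) ^ b - B * t ^ c * (1 - t) ^ d)
        ((fun x => -(x^(c-1) * (1-x)^(d-1)) * hC a b c d A B x) x) x :=
    fun x hx => hasDerivAt_f a b c d A B hx.1 hx.2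
  have Dh : ∀ x ∈ Ioo (0:ℝ) 1,
      HasDerivAt (fun t => hC a b c d A B t) ((fun x => h1C a b c d A B x) x) x :=
    fun x hx => hasDerivAt_hC a b c d A B hx.1 hx.2
  have Dh1 : ∀ x ∈ Ioo (0:ℝ) 1,
      HasDerivAt (fun t => h1C a b c d A B t) ((fun x => h2C a b c d A B x) x) x :=
    fun x hx => hasDerivAt_h1C a b c d A B hx.1 hx.2
  -- Step 1: five zeros of hC
  have step1 : ∀ i j : Fin 6, i < j →
      ∃ z, z ∈ Ioo (T i) (T j) ∧ z ∈ Ioo (0:ℝ) 1 ∧ hC a b c d A B z = 0 := by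
    intro i j hij
    obtain ⟨z, hz1, hz2⟩ := rolle_step DF (hio i) (hio j) (hmono hij) (hz i) (hz j)
    have hzio : z ∈ Ioo (0:ℝ) 1 := ⟨(hio i).1.trans hz1.1, hz1.2.trans (hio j).2⟩
    refine ⟨z, hz1, hzio, ?_⟩
    have hpos : 0 < z^(c-1) * (1-z)^(d-1) :=
      mul_pos (rpow_pos_of_pos hzio.1 _)
        (rpow_pos_of_pos (by linarith [hzio.2] : (0:ℝ) < 1 - z) _)
    have hne : -(z^(c-1) * (1-z)^(d-1)) ≠ 0 := neg_ne_zero.mpr hpos.ne'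
    rcases mul_eq_zero.mp hz2 with h|h
    · exact absurd h hne
    · exact h
  obtain ⟨z1, hz1T, hz1io, hz1e⟩ := step1 0 1 (by decide)
  obtain ⟨z2, hz2T, hz2io, hz2e⟩ := step1 1 2 (by decide)
  obtain ⟨z3, hz3T, hz3io, hz3e⟩ := step1 2 3 (by decide)
  obtain ⟨z4, hz4T, hz4io, hz4e⟩ := step1 3 4 (by decide)
  obtain ⟨z5, hz5T, hz5io, hz5e⟩ := step1 4 5 (by decide)
  have hz12 : z1 < z2 := hz1T.2.trans hz2T.1
  have hz23 : z2 < z3 := hz2T.2.trans hz3T.1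
  have hz34 : z3 < z4 := hz3T.2.trans hz4T.1
  have hz45 : z4 < z5 := hz4T.2.trans hz5T.1
  -- Step 2: four zeros of h1C
  have step2 : ∀ u v : ℝ, u ∈ Ioo (0:ℝ) 1 → v ∈ Ioo (0:ℝ) 1 → u < v →
      hC a b c d A B u = 0 → hC a b c d A B v = 0 →
      ∃ w, w ∈ Ioo u v ∧ w ∈ Ioo (0:ℝ) 1 ∧ h1C a b c d A B w = 0 ∧ RC a b c d w < 0 := by
    intro u v hu hv huv h0u h0v
    obtain ⟨w, hw1, hw2⟩ := rolle_step Dh hu hv huv h0u h0v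
    have hwio : w ∈ Ioo (0:ℝ) 1 := ⟨hu.1.trans hw1.1, hw1.2.trans hv.2⟩
    exact ⟨w, hw1, hwio, hw2, h1C_zero_RC_neg a b c d A B hA hB hc hd hwio hw2⟩
  obtain ⟨w1, hw1T, hw1io, hw1e, hw1R⟩ := step2 z1 z2 hz1io hz2io hz12 hz1e hz2e
  obtain ⟨w2, hw2T, hw2io, hw2e, hw2R⟩ := step2 z2 z3 hz2io hz3io hz23 hz2e hz3e
  obtain ⟨w3, hw3T, hw3io, hw3e, hw3R⟩ := step2 z3 z4 hz3io hz4io hz34 hz3e hz4e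
  obtain ⟨w4, hw4T, hw4io, hw4e, hw4R⟩ := step2 z4 z5 hz4io hz5io hz45 hz4e hz5e
  have hw12 : w1 < w2 := hw1T.2.trans hw2T.1
  have hw23 : w2 < w3 := hw2T.2.trans hw3T.1
  have hw34 : w3 < w4 := hw3T.2.trans hw4T.1
  -- Step 3: three zeros of h2C, i.e. of S
  have step3 : ∀ u v : ℝ, u ∈ Ioo (0:ℝ) 1 → v ∈ Ioo (0:ℝ) 1 → u < v →
      h1C a b c d A B u = 0 → h1C a b c d A B v = 0 →
      ∃ s, s ∈ Ioo u v ∧ s ∈ Ioo (0:ℝ) 1 ∧ SC a b c d s = 0 := by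
    intro u v hu hv huv h0u h0v
    obtain ⟨s, hs1, hs2⟩ := rolle_step Dh1 hu hv huv h0u h0v
    have hsio : s ∈ Ioo (0:ℝ) 1 := ⟨hu.1.trans hs1.1, hs1.2.trans hv.2⟩
    exact ⟨s, hs1, hsio, h2C_zero_SC_zero a b c d A B hA hsio hs2⟩
  obtain ⟨s1, hs1T, hs1io, hs1S⟩ := step3 w1 w2 hw1io hw2io hw12 hw1e hw2e
  obtain ⟨s2, hs2T, hs2io, hs2S⟩ := step3 w2 w3 hw2io hw3io hw23 hw2e hw3e
  obtain ⟨s3, hs3T, hs3io, hs3S⟩ := step3 w3 w4 hw3io hw4io hw34 hw3e hw4e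
  have hs12 : s1 < s2 := hs1T.2.trans hs2T.1
  have hs23 : s2 < s3 := hs2T.2.trans hs3T.1
  have hRs1 : RC a b c d s1 < 0 :=
    RC_between a b c d ha hb hc hd hs1T.1 hs1T.2 hw1R hw2R
  exact keyC a b c d ha hb hc hd (hw1io.1.trans hs1T.1) hs12 hs23
    (hs3T.2.trans hw4io.2) hRs1 hs1S hs2S hs3S
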